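/- Let f : ℂ → ℂ be entire with f(0) ≠ 0, and suppose f admits the genus-one Weierstrass product representation f(z) = f(0) · ∏_{n=1}^∞ (1 − z/a_n) e^{z/a_n}, where (a_n) is the sequence of zeros of f (all nonzero) and Σ_{n=1}^∞ 1/|a_n|² < ∞. Then for every integer m ≥ 2, the m-th Taylor coefficient at 0 of log(f(z)/f(0)) (i.e. (1/m!) times the m-th derivative at 0 of any holomorphic logarithm of f/f(0) near 0) equals −(1/m) Σ_{n=1}^∞ 1/a_n^m, the series on the right converging absolutely. -/

import Mathlib

open Complex Filter Topology

/-- **Sum rules from the genus-one product.**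
Let `f` be entire with `f 0 ≠ 0`, admitting the genus-one Weierstrass product
`f z = f 0 · ∏_n (1 - z/a n) exp (z/a n)` over its (nonzero) zeros `a n`, with
`Σ 1/‖a n‖² < ∞`.  Then for every `m ≥ 2` the series `Σ_n 1/a n ^ m` converges absolutely,
and the `m`-th Taylor coefficient at `0` of any holomorphic logarithm `g` of `f/f 0`
(normalised by `g 0 = 0`) equals `-(1/m) Σ_n 1/a n ^ m`. -/
theorem taylor_coeff_log_eq_neg_sum_inv_pow_zeros
    (f : ℂ → ℂ) (a : ℕ → ℂ)
    (hf : Differentiable ℂ f) (hf0 : f 0 ≠ 0)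
    (ha0 : ∀ n, a n ≠ 0)
    (hzeros : ∀ z : ℂ, f z = 0 ↔ ∃ n, a n = z)
    (hsum : Summable fun n => 1 / ‖a n‖ ^ 2)
    (hprod : ∀ z : ℂ,
      HasProd (fun n => (1 - z / a n) * Complex.exp (z / a n)) (f z / f 0))
    (m : ℕ) (hm : 2 ≤ m)
    (g : ℂ → ℂ) (hg : AnalyticAt ℂ g 0) (hg0 : g 0 = 0)
    (hgf : ∀ᶠ z in 𝓝 (0 : ℂ), Complex.exp (g z) = f z / f 0) :
    Summable (fun n => ‖((a n) ^ m)⁻¹‖) ∧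
      iteratedDeriv m g 0 / (Nat.factorial m : ℂ) =
        -(1 / (m : ℂ)) * ∑' n : ℕ, ((a n) ^ m)⁻¹ := by
  classical
  -- a uniform lower bound on the moduli of the zeros
  obtain ⟨δ, hδ0, hδ⟩ : ∃ δ : ℝ, 0 < δ ∧ ∀ n, δ ≤ ‖a n‖ := by
    obtain ⟨C, hC⟩ := (hsum.tendsto_atTop_zero).bddAbove_range
    refine ⟨Real.sqrt (1 / max C 1), Real.sqrt_pos.mpr (by positivity), fun n => ?_⟩
    have han : (0:ℝ) < ‖a n‖ := norm_pos_iff.mpr (ha0 n)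
    have h1 : 1 / ‖a n‖ ^ 2 ≤ max C 1 :=
      le_trans (hC ⟨n, rfl⟩) (le_max_left _ _)
    have h2 : 1 / max C 1 ≤ ‖a n‖ ^ 2 := by
      have := one_div_le_one_div_of_le (by positivity : (0:ℝ) < 1 / ‖a n‖ ^ 2) h1
      rwa [one_div_one_div] at this
    calc Real.sqrt (1 / max C 1) ≤ Real.sqrt (‖a n‖ ^ 2) := Real.sqrt_le_sqrt h2
      _ = ‖a n‖ := Real.sqrt_sq han.le
  have hkey : ∀ n, ‖a n‖⁻¹ ≤ δ⁻¹ := fun n =>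
    inv_anti₀ hδ0 (hδ n)
  have hsum2 : Summable fun n => ‖a n‖⁻¹ ^ 2 := by
    simpa [one_div, inv_pow] using hsum
  -- pointwise bound for the terms of the power sums
  have hbound : ∀ k, 2 ≤ k → ∀ n, ‖((a n) ^ k)⁻¹‖ ≤ ‖a n‖⁻¹ ^ 2 * δ⁻¹ ^ (k - 2) := by
    intro k hk n
    have h1 : ‖((a n) ^ k)⁻¹‖ = ‖a n‖⁻¹ ^ k := by
      simp [inv_pow]
    rw [h1]
    calc ‖a n‖⁻¹ ^ k = ‖a n‖⁻¹ ^ 2 * ‖a n‖⁻¹ ^ (k - 2) := by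
          rw [← pow_add]; congr 1; omega
      _ ≤ ‖a n‖⁻¹ ^ 2 * δ⁻¹ ^ (k - 2) :=
          mul_le_mul_of_nonneg_left
            (pow_le_pow_left₀ (inv_nonneg.mpr (norm_nonneg _)) (hkey n) _)
            (by positivity)
  -- summability of the power sums
  have hSnorm : ∀ k, 2 ≤ k → Summable (fun n => ‖((a n) ^ k)⁻¹‖) := by
    intro k hk
    exact Summable.of_nonneg_of_le (fun n => norm_nonneg _) (hbound k hk)
      (hsum2.mul_right _)
  refine ⟨hSnorm m hm, ?_⟩
  set T : ℝ := ∑' n, ‖a n‖⁻¹ ^ 2 with hTdef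
  have hT0 : 0 ≤ T := tsum_nonneg fun n => by positivity
  set S : ℕ → ℂ := fun k => ∑' n, ((a n) ^ k)⁻¹ with hSdef
  set c : ℕ → ℂ := fun k => if 2 ≤ k then -(1 / (k : ℂ)) * S k else 0 with hcdef
  -- bound on the coefficients
  have hSbound : ∀ k, 2 ≤ k → ‖S k‖ ≤ T * δ⁻¹ ^ (k - 2) := by
    intro k hk
    calc ‖S k‖ ≤ ∑' n, ‖((a n) ^ k)⁻¹‖ := norm_tsum_le_tsum_norm (hSnorm k hk)
      _ ≤ ∑' n, ‖a n‖⁻¹ ^ 2 * δ⁻¹ ^ (k - 2) :=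
          Summable.tsum_le_tsum (hbound k hk) (hSnorm k hk) (hsum2.mul_right _)
      _ = T * δ⁻¹ ^ (k - 2) := by rw [tsum_mul_right]
  have hcb : ∀ j : ℕ, ‖c (j + 2)‖ ≤ T * δ⁻¹ ^ j := by
    intro j
    have h2 : (2:ℕ) ≤ j + 2 := by omega
    have : c (j + 2) = -(1 / ((j + 2 : ℕ) : ℂ)) * S (j + 2) := by
      simp only [hcdef, if_pos h2]
    rw [this, norm_mul, norm_neg]
    have hn1 : ‖(1 / ((j + 2 : ℕ) : ℂ))‖ ≤ 1 := by
      rw [norm_div, norm_one, Complex.norm_natCast]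
      rw [div_le_one (by positivity)]
      exact_mod_cast Nat.one_le_iff_ne_zero.mpr (by omega)
    calc ‖(1 / ((j + 2 : ℕ) : ℂ))‖ * ‖S (j + 2)‖ ≤ 1 * (T * δ⁻¹ ^ (j + 2 - 2)) :=
          mul_le_mul hn1 (hSbound _ h2) (norm_nonneg _) one_pos.le
      _ = T * δ⁻¹ ^ j := by norm_num
  -- summability of the coefficient series against geometric weights
  have hsumc : ∀ t : ℝ, 0 ≤ t → t < δ → Summable (fun k => ‖c k‖ * t ^ k) := by
    intro t ht0 htδ
    rw [← summable_nat_add_iff 2]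
    have hrat : δ⁻¹ * t < 1 := by
      rw [inv_mul_lt_iff₀ hδ0, mul_one]; exact htδ
    refine Summable.of_nonneg_of_le (fun j => by positivity) (fun j => ?_)
      ((summable_geometric_of_lt_one (by positivity) hrat).mul_left (T * t ^ 2))
    calc ‖c (j + 2)‖ * t ^ (j + 2) ≤ (T * δ⁻¹ ^ j) * t ^ (j + 2) := by
          have := hcb j
          exact mul_le_mul_of_nonneg_right this (by positivity)
      _ = T * t ^ 2 * (δ⁻¹ * t) ^ j := by rw [mul_pow, pow_add]; ring
  -- the candidate logarithm as a power series sum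
  set h : ℂ → ℂ := fun z => ∑' k, c k * z ^ k with hhdef
  have hsummand : ∀ z : ℂ, ‖z‖ < δ → Summable (fun k => c k * z ^ k) := by
    intro z hz
    refine Summable.of_norm ?_
    simpa [norm_mul, norm_pow] using hsumc ‖z‖ (norm_nonneg z) hz
  set ρ : NNReal := ⟨δ / 2, by positivity⟩ with hρdef
  have hρδ : (δ / 2 : ℝ) < δ := by linarith
  have hps : HasFPowerSeriesOnBall h (FormalMultilinearSeries.ofScalars ℂ c) 0 ρ := by
    refine ⟨?_, ?_, ?_⟩
    · apply FormalMultilinearSeries.le_radius_of_summable_norm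
      have h1 : ∀ n : ℕ, ‖FormalMultilinearSeries.ofScalars ℂ c n‖ * (ρ : ℝ) ^ n
          = ‖c n‖ * (δ / 2) ^ n := by
        intro n
        rw [FormalMultilinearSeries.ofScalars_norm]
        rfl
      simp_rw [h1]
      exact hsumc (δ / 2) (by positivity) hρδ
    · exact_mod_cast (by positivity : (0:ℝ) < δ / 2)
    · intro y hy
      rw [mem_emetric_ball_zero_iff] at hy
      have hy' : ‖y‖ < δ / 2 := by
        have : (‖y‖₊ : ℝ) < (ρ : ℝ) := by exact_mod_cast hy
        exact this
      simp only [FormalMultilinearSeries.ofScalars_apply_eq, zero_add, smul_eq_mul]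
      exact (hsummand y (lt_trans hy' hρδ)).hasSum
  -- the exponential of `h` equals `f / f 0` on the small disk
  have hexp : ∀ z : ℂ, ‖z‖ < δ / 2 → Complex.exp (h z) = f z / f 0 := by
    intro z hz
    have hzδ : ‖z‖ < δ := lt_trans hz hρδ
    have hw : ∀ n, ‖z / a n‖ ≤ ‖z‖ / δ := by
      intro n
      rw [norm_div]
      exact div_le_div_of_nonneg_left (norm_nonneg z) hδ0 (hδ n)
    have hw2 : ∀ n, ‖z / a n‖ < 1 / 2 := by
      intro n
      refine lt_of_le_of_lt (hw n) ?_
      rw [div_lt_div_iff₀ hδ0 two_pos] at *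
      nlinarith [hz]
    have hw1 : ∀ n, ‖z / a n‖ < 1 := fun n => lt_trans (hw2 n) (by norm_num)
    -- the double-indexed family
    set F : ℕ × ℕ → ℂ := fun q => -((z / a q.1) ^ (q.2 + 2) / ((q.2 : ℂ) + 2)) with hFdef
    have hFnorm : Summable fun q : ℕ × ℕ => ‖F q‖ := by
      have hgeo : Summable fun k : ℕ => ((2:ℝ)⁻¹) ^ k :=
        summable_geometric_of_lt_one (by norm_num) (by norm_num)
      have hprod2 : Summable fun q : ℕ × ℕ =>
          (‖z‖ ^ 2 * ‖a q.1‖⁻¹ ^ 2) * ((2:ℝ)⁻¹) ^ q.2 :=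
        (hsum2.mul_left (‖z‖ ^ 2)).mul_of_nonneg hgeo
          (fun n => by positivity) (fun k => by positivity)
      refine Summable.of_nonneg_of_le (fun q => norm_nonneg _) (fun q => ?_) hprod2
      obtain ⟨n, k⟩ := q
      have hd : (1:ℝ) ≤ ‖((k : ℂ) + 2)‖ := by
        rw [show ((k : ℂ) + 2) = ((k + 2 : ℕ) : ℂ) by push_cast; ring, Complex.norm_natCast]
        exact_mod_cast Nat.one_le_iff_ne_zero.mpr (by omega)
      have h1 : ‖F (n, k)‖ ≤ ‖z / a n‖ ^ (k + 2) := by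
        have e : ‖F (n, k)‖ = ‖z / a n‖ ^ (k + 2) / ‖((k:ℂ) + 2)‖ := by
          show ‖-((z / a n) ^ (k + 2) / ((k : ℂ) + 2))‖ = _
          rw [norm_neg, norm_div, norm_pow]
        rw [e]
        exact div_le_self (by positivity) hd
      refine h1.trans ?_
      have : ‖z / a n‖ ^ (k + 2) = ‖z / a n‖ ^ 2 * ‖z / a n‖ ^ k := by
        rw [← pow_add]; ring_nf
      rw [this]
      have e1 : ‖z / a n‖ ^ 2 ≤ ‖z‖ ^ 2 * ‖a n‖⁻¹ ^ 2 := by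
        rw [norm_div, div_pow, div_eq_mul_inv, ← inv_pow]
      have e2 : ‖z / a n‖ ^ k ≤ ((2:ℝ)⁻¹) ^ k :=
        pow_le_pow_left₀ (norm_nonneg _) (by simpa [one_div] using (hw2 n).le) k
      exact mul_le_mul e1 e2 (by positivity) (by positivity)
    have hFsum : Summable F := hFnorm.of_norm
    -- row sums: Taylor series of log(1 - z/aₙ) + z/aₙ
    have hrow : ∀ n, HasSum (fun k => F (n, k))
        (Complex.log (1 - z / a n) + z / a n) := by
      intro n
      set w : ℂ := z / a n with hwdef
      have hts := Complex.hasSum_taylorSeries_neg_log (hw1 n)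
      have h2 : HasSum (fun k : ℕ => w ^ (k + 2) / ((k : ℂ) + 2))
          (-Complex.log (1 - w) - ∑ i ∈ Finset.range 2, w ^ i / (i : ℂ)) := by
        have := (hasSum_nat_add_iff' (f := fun k : ℕ => w ^ k / (k : ℂ)) 2).mpr hts
        refine this.congr_fun fun k => ?_
        push_cast
        ring_nf
      have hsum01 : (∑ i ∈ Finset.range 2, w ^ i / (i : ℂ)) = w := by
        simp [Finset.sum_range_succ]
      rw [hsum01] at h2
      have h3 := h2.neg
      have e3 : -(-Complex.log (1 - w) - w) = Complex.log (1 - w) + w := by ring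
      rw [e3] at h3
      exact h3
    -- column sums
    have hcol : ∀ k : ℕ, HasSum (fun n => F (n, k)) (c (k + 2) * z ^ (k + 2)) := by
      intro k
      have hsml : Summable fun n => ((a n) ^ (k + 2))⁻¹ :=
        (hSnorm (k + 2) (by omega)).of_norm
      have h1 := hsml.hasSum.mul_left (-(1 / ((k : ℂ) + 2)) * z ^ (k + 2))
      have e1 : ∀ n, (-(1 / ((k : ℂ) + 2)) * z ^ (k + 2)) * ((a n) ^ (k + 2))⁻¹
          = F (n, k) := by
        intro n
        show _ = -((z / a n) ^ (k + 2) / ((k : ℂ) + 2))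
        rw [div_pow]
        field_simp
      have e2 : (-(1 / ((k : ℂ) + 2)) * z ^ (k + 2)) * S (k + 2)
          = c (k + 2) * z ^ (k + 2) := by
        have : c (k + 2) = -(1 / (((k + 2 : ℕ)) : ℂ)) * S (k + 2) := by
          simp only [hcdef, if_pos (by omega : 2 ≤ k + 2)]
        rw [this]
        push_cast
        ring
      rw [e2] at h1
      exact h1.congr_fun fun n => (e1 n).symm
    -- swap the two summations
    have hswap : HasSum (fun k => c (k + 2) * z ^ (k + 2)) (∑' q, F q) := by
      have hFsum' : Summable (F ∘ ⇑(Equiv.prodComm ℕ ℕ)) :=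
        ((Equiv.prodComm ℕ ℕ).summable_iff (f := F)).mpr hFsum
      have h5 := hFsum'.hasSum.prod_fiberwise (fun k => hcol k)
      have e4 : ∑' (b : ℕ × ℕ), (F ∘ ⇑(Equiv.prodComm ℕ ℕ)) b = ∑' q, F q :=
        (Equiv.prodComm ℕ ℕ).tsum_eq F
      rwa [e4] at h5
    have hrows : HasSum (fun n => Complex.log (1 - z / a n) + z / a n) (∑' q, F q) :=
      hFsum.hasSum.prod_fiberwise hrow
    -- identify `h z` with the double sum
    have hhz : h z = ∑' q, F q := by
      have h1 := (hasSum_nat_add_iff (f := fun k => c k * z ^ k) 2).mp hswap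
      have h2 : (∑ i ∈ Finset.range 2, c i * z ^ i) = 0 := by
        have hc0 : c 0 = 0 := by simp [hcdef]
        have hc1 : c 1 = 0 := by simp [hcdef]
        simp [Finset.sum_range_succ, hc0, hc1]
      rw [h2, add_zero] at h1
      exact h1.tsum_eq
    -- take exponentials
    have hne : ∀ n, (1 : ℂ) - z / a n ≠ 0 := by
      intro n h0
      have : z / a n = 1 := by linear_combination -h0
      have := hw1 n
      rw [‹z / a n = 1›] at this
      simp at this
    have hprodexp : HasProd (fun n => Complex.exp
        (Complex.log (1 - z / a n) + z / a n)) (Complex.exp (∑' q, F q)) :=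
      hrows.cexp
    have efun : (fun n => Complex.exp (Complex.log (1 - z / a n) + z / a n))
        = fun n => (1 - z / a n) * Complex.exp (z / a n) :=
      funext fun n => by rw [Complex.exp_add, Complex.exp_log (hne n)]
    rw [efun] at hprodexp
    rw [hhz]
    exact hprodexp.unique (hprod z)
  -- `h 0 = 0`
  have hh0 : h 0 = 0 := by
    have : ∀ k : ℕ, k ≠ 0 → c k * (0:ℂ) ^ k = 0 := by
      intro k hk
      simp [zero_pow hk]
    rw [hhdef]
    simp only []
    rw [tsum_eq_single 0 this]
    simp [hcdef]
  -- choose a small ball where everything holds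
  obtain ⟨ε, hε0, hε⟩ := Metric.eventually_nhds_iff_ball.mp
    (hgf.and hg.eventually_analyticAt)
  set ε' : ℝ := min ε (δ / 2) with hε'def
  have hε'0 : 0 < ε' := lt_min hε0 (by positivity)
  have hballs : Metric.ball (0:ℂ) ε' ⊆ Metric.ball 0 ε :=
    Metric.ball_subset_ball (min_le_left _ _)
  have hball2 : ∀ z ∈ Metric.ball (0:ℂ) ε', ‖z‖ < δ / 2 := by
    intro z hz
    rw [Metric.mem_ball, dist_zero_right] at hz
    exact lt_of_lt_of_le hz (min_le_right _ _)
  have hballE : Metric.ball (0:ℂ) ε' ⊆ Metric.eball 0 (ρ : ENNReal) := by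
    intro z hz
    rw [mem_emetric_ball_zero_iff]
    have : ‖z‖ < δ / 2 := hball2 z hz
    exact_mod_cast this
  -- g = h on the small ball, via a clopen argument
  have hgh : ∀ z ∈ Metric.ball (0:ℂ) ε', g z = h z := by
    have hcont : ContinuousOn (fun z => g z - h z) (Metric.ball (0:ℂ) ε') := by
      apply ContinuousOn.sub
      · intro x hx
        exact ((hε x (hballs hx)).2).continuousAt.continuousWithinAt
      · exact (hps.continuousOn.mono hballE)
    have hker : ∀ z ∈ Metric.ball (0:ℂ) ε', ∃ k : ℤ, g z - h z = k * (2 * Real.pi * I) := by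
      intro z hz
      have h1 : Complex.exp (g z) = f z / f 0 := (hε z (hballs hz)).1
      have h2 : Complex.exp (h z) = f z / f 0 := hexp z (hball2 z hz)
      have : Complex.exp (g z - h z) = 1 := by
        rw [Complex.exp_sub, h1, ← h2, div_self (Complex.exp_ne_zero _)]
      exact Complex.exp_eq_one_iff.mp this
    haveI : PreconnectedSpace (Metric.ball (0:ℂ) ε') :=
      Subtype.preconnectedSpace ((convex_ball (0:ℂ) ε').isPreconnected)
    set v : Metric.ball (0:ℂ) ε' → ℂ :=
      (Metric.ball (0:ℂ) ε').restrict (fun z => g z - h z) with hvdef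
    have hv : Continuous v := hcont.restrict
    have hpre : v ⁻¹' {0} = v ⁻¹' (Metric.ball 0 1) := by
      ext x
      simp only [Set.mem_preimage, Set.mem_singleton_iff, Metric.mem_ball, dist_zero_right]
      constructor
      · intro h'; rw [h']; simp
      · intro h'
        obtain ⟨k, hk⟩ := hker x x.2
        have hvx : v x = (k : ℂ) * (2 * Real.pi * I) := hk
        rw [hvx] at h'
        have hnrm : ‖(k : ℂ) * (2 * Real.pi * I)‖ = |(k : ℝ)| * (2 * Real.pi) := by
          rw [norm_mul]
          congr 1
          · rw [Complex.norm_intCast]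
          · simp only [norm_mul, Complex.norm_I, mul_one, Complex.norm_ofNat,
              Complex.norm_real, Real.norm_eq_abs]
            rw [_root_.abs_of_nonneg Real.pi_pos.le]
        rw [hnrm] at h'
        have hk0 : k = 0 := by
          by_contra hk0
          have h1k : (1:ℤ) ≤ |k| := Int.one_le_abs hk0
          have : (1:ℝ) ≤ |(k:ℝ)| := by
            rw [← Int.cast_abs]
            exact_mod_cast h1k
          nlinarith [Real.pi_gt_three]
        rw [hvx, hk0]
        simp
    have hclopen : IsClopen (v ⁻¹' {0}) :=
      ⟨isClosed_singleton.preimage hv, hpre ▸ Metric.isOpen_ball.preimage hv⟩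
    have hmem : (⟨0, Metric.mem_ball_self hε'0⟩ : Metric.ball (0:ℂ) ε') ∈ v ⁻¹' {0} := by
      simp only [Set.mem_preimage, Set.mem_singleton_iff, hvdef, Set.restrict_apply]
      show g 0 - h 0 = 0
      rw [hg0, hh0, sub_zero]
    have huniv := hclopen.eq_univ ⟨_, hmem⟩
    intro z hz
    have : (⟨z, hz⟩ : Metric.ball (0:ℂ) ε') ∈ v ⁻¹' {0} := by
      rw [huniv]; trivial
    have : v ⟨z, hz⟩ = 0 := this
    change g z - h z = 0 at this
    simpa [hvdef, sub_eq_zero] using this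
  -- transfer the power series to `g` and read off the coefficient
  have hgh' : g =ᶠ[𝓝 (0:ℂ)] h := by
    filter_upwards [Metric.ball_mem_nhds (0:ℂ) hε'0] with z hz using hgh z hz
  have hgps : HasFPowerSeriesAt g (FormalMultilinearSeries.ofScalars ℂ c) 0 :=
    hps.hasFPowerSeriesAt.congr hgh'.symm
  obtain ⟨r, hr⟩ := hgps
  have hfact := hr.factorial_smul (1:ℂ) m
  have hcm : (FormalMultilinearSeries.ofScalars ℂ c m) (fun _ => (1:ℂ)) = c m := by
    rw [FormalMultilinearSeries.ofScalars_apply_eq]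
    simp
  have hiter : iteratedDeriv m g 0 = (Nat.factorial m : ℂ) * c m := by
    rw [iteratedDeriv_eq_iteratedFDeriv, ← hfact, hcm, nsmul_eq_mul]
  have hmfac : (Nat.factorial m : ℂ) ≠ 0 := by
    exact_mod_cast Nat.factorial_ne_zero m
  rw [hiter, mul_comm, mul_div_assoc, div_self hmfac, mul_one]
  simp only [hcdef, if_pos hm]
  rfl
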